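/- arXiv:0710.5856 — 5 statements merged into one kernel-verified Lean document; each statement's English description precedes it below -/
import Mathlib

section
/- The entries of M = S̄ S⁻¹, where S is the Vandermonde matrix S_{ij} = Q_i^{j-1} and S̄_{ij} = (j-1) Q_i^{j-1}, are given by: for i ≠ j, M_{ij} = Q_i · ∏_{s≠i,j}(Q_i - Q_s) / ∏_{s≠j}(Q_j - Q_s), and M_{ii} = Q_i · Σ_{s≠i} 1/(Q_i - Q_s). -/
open Matrix Finset Polynomial

private lemma deriv_fin_prod {R : Type*} [CommRing R] {ι : Type*} [DecidableEq ι]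
    (s : Finset ι) (f : ι → R[X]) :
    derivative (∏ i ∈ s, f i) = ∑ i ∈ s, (∏ j ∈ s.erase i, f j) * derivative (f i) := by
  induction s using Finset.induction_on with
  | empty => simp
  | @insert a s ha ih =>
    rw [prod_insert ha, derivative_mul, ih, Finset.mul_sum, sum_insert ha, erase_insert ha]
    congr 1
    · ring
    · refine sum_congr rfl fun b hb => ?_
      rw [Finset.erase_insert_of_ne ((ne_of_mem_of_not_mem hb ha).symm),
        prod_insert (fun h => ha (Finset.mem_of_mem_erase h)), mul_assoc]

private lemma eval_deriv_basis {N : ℕ} (Q : Fin N → ℂ) (hQdist : Function.Injective Q)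
    (i j : Fin N) :
    eval (Q i) (derivative (Lagrange.basis univ Q j)) =
      if i = j then ∑ t ∈ univ.erase i, (Q i - Q t)⁻¹
      else (∏ s ∈ (univ.erase j).erase i, (Q i - Q s)) *
        (∏ s ∈ univ.erase j, (Q j - Q s))⁻¹ := by
  have hne : ∀ a b : Fin N, a ≠ b → Q a - Q b ≠ 0 :=
    fun a b h => sub_ne_zero_of_ne (fun hc => h (hQdist hc))
  rw [Lagrange.basis, deriv_fin_prod, eval_finset_sum]
  have hd : ∀ t, derivative (Lagrange.basisDivisor (Q j) (Q t)) = C ((Q j - Q t)⁻¹) := by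
    intro t
    simp [Lagrange.basisDivisor]
  have hterm : ∀ t,
      eval (Q i) ((∏ s ∈ (univ.erase j).erase t, Lagrange.basisDivisor (Q j) (Q s)) *
        derivative (Lagrange.basisDivisor (Q j) (Q t))) =
      (∏ s ∈ (univ.erase j).erase t, ((Q j - Q s)⁻¹ * (Q i - Q s))) * (Q j - Q t)⁻¹ := by
    intro t
    rw [hd, eval_mul, eval_C, eval_prod]
    congr 1
    exact prod_congr rfl fun s _ => by simp [Lagrange.basisDivisor]
  simp_rw [hterm]
  by_cases hij : i = j
  · subst hij
    rw [if_pos rfl]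
    refine sum_congr rfl fun t ht => ?_
    rw [prod_congr rfl (fun s hs => inv_mul_cancel₀
      (hne i s (fun h => (Finset.ne_of_mem_erase (Finset.mem_of_mem_erase hs)) h.symm))),
      prod_const_one, one_mul]
  · rw [if_neg hij]
    have hi : i ∈ univ.erase j := Finset.mem_erase.mpr ⟨hij, mem_univ i⟩
    rw [← Finset.add_sum_erase _ _ hi]
    have hz : ∀ t ∈ (univ.erase j).erase i,
        (∏ s ∈ (univ.erase j).erase t, ((Q j - Q s)⁻¹ * (Q i - Q s))) * (Q j - Q t)⁻¹ = 0 := by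
      intro t ht
      have hti : i ∈ (univ.erase j).erase t := by
        refine Finset.mem_erase.mpr ⟨fun h => (Finset.ne_of_mem_erase ht) h.symm, hi⟩
      rw [Finset.prod_eq_zero hti (by simp), zero_mul]
    rw [Finset.sum_eq_zero hz, add_zero, prod_mul_distrib, prod_inv_distrib]
    have hprod : ∏ s ∈ univ.erase j, (Q j - Q s)
        = (Q j - Q i) * ∏ s ∈ (univ.erase j).erase i, (Q j - Q s) :=
      (Finset.mul_prod_erase _ _ hi).symm
    rw [hprod, mul_inv]
    ring

private lemma interp_pow {N : ℕ} (Q : Fin N → ℂ) (hQdist : Function.Injective Q)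
    (k : Fin N) :
    (X : ℂ[X]) ^ (k : ℕ) = ∑ j, C (Q j ^ (k : ℕ)) * Lagrange.basis univ Q j := by
  have hinj : Set.InjOn Q (univ : Finset (Fin N)) := fun a _ b _ h => hQdist h
  have hdeg : ((X : ℂ[X]) ^ (k : ℕ)).degree < (#(univ : Finset (Fin N)) : ℕ) := by
    rw [degree_X_pow, Finset.card_univ, Fintype.card_fin]
    exact_mod_cast k.isLt
  have := Lagrange.eq_interpolate hinj hdeg
  rw [Lagrange.interpolate_apply] at this
  simp only [eval_pow, eval_X] at this
  exact this

/-- Entries of `M = S̄ S⁻¹` where `S` is the Vandermonde matrix `S i j = Q i ^ j`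
and `S̄ i j = j * Q i ^ j` (0-indexed): off-diagonal entries are
`Q i * ∏_{s ≠ i,j} (Q i - Q s) / ∏_{s ≠ j} (Q j - Q s)` and diagonal entries are
`Q i * Σ_{s ≠ i} 1/(Q i - Q s)`. -/
theorem stmt_2 (N : ℕ) (Q : Fin N → ℂ) (hQdist : Function.Injective Q)
    (hQ0 : ∀ i, Q i ≠ 0)
    (S Sbar M : Matrix (Fin N) (Fin N) ℂ)
    (hS : ∀ i j, S i j = Q i ^ (j : ℕ))
    (hSbar : ∀ i j, Sbar i j = (j : ℕ) * Q i ^ (j : ℕ))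
    (hM : M = Sbar * S⁻¹) :
    ∀ i j, M i j =
      if i = j then Q i * ∑ s ∈ univ.erase i, 1 / (Q i - Q s)
      else Q i * (∏ s ∈ (univ.erase i).erase j, (Q i - Q s)) /
        ∏ s ∈ univ.erase j, (Q j - Q s) := by
  set Mc : Matrix (Fin N) (Fin N) ℂ := Matrix.of fun i j =>
    if i = j then Q i * ∑ s ∈ univ.erase i, 1 / (Q i - Q s)
    else Q i * (∏ s ∈ (univ.erase i).erase j, (Q i - Q s)) /
      ∏ s ∈ univ.erase j, (Q j - Q s) with hMc
  have hdet : IsUnit S.det := by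
    have hSv : S = Matrix.vandermonde Q := by
      ext i j; rw [hS]; rfl
    rw [hSv, Matrix.det_vandermonde]
    refine isUnit_iff_ne_zero.mpr (Finset.prod_ne_zero_iff.mpr fun i _ =>
      Finset.prod_ne_zero_iff.mpr fun j hj => sub_ne_zero_of_ne fun h =>
        (Finset.mem_Ioi.mp hj).ne' (hQdist h))
  -- Mc in terms of derivative of Lagrange basis
  have hMcd : ∀ i j, Mc i j = Q i * eval (Q i) (derivative (Lagrange.basis univ Q j)) := by
    intro i j
    rw [eval_deriv_basis Q hQdist i j, hMc]
    by_cases hij : i = j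
    · simp only [Matrix.of_apply, if_pos hij, one_div]
    · simp only [Matrix.of_apply, if_neg hij]
      rw [div_eq_mul_inv, mul_assoc, Finset.erase_right_comm]
  have hMcS : Mc * S = Sbar := by
    ext i k
    rw [Matrix.mul_apply, hSbar]
    have h1 := congrArg (fun p => eval (Q i) (derivative p)) (interp_pow Q hQdist k)
    simp only [derivative_X_pow, map_sum, derivative_C_mul, eval_finset_sum, eval_mul, eval_C,
      eval_pow, eval_X, eval_natCast] at h1
    have h2 : ∑ j, Mc i j * S j k = Q i * ∑ j, Q j ^ (k : ℕ) *
        eval (Q i) (derivative (Lagrange.basis univ Q j)) := by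
      rw [Finset.mul_sum]
      exact sum_congr rfl fun j _ => by rw [hMcd, hS]; ring
    rw [h2, ← h1]
    rcases Nat.eq_zero_or_pos (k : ℕ) with h0 | hpos
    · simp [h0]
    · obtain ⟨m, hm⟩ := Nat.exists_eq_succ_of_ne_zero hpos.ne'
      rw [hm]
      simp only [Nat.succ_sub_one]
      rw [pow_succ]
      ring
  have hfin : M = Mc := by
    rw [hM, ← hMcS, Matrix.mul_nonsing_inv_cancel_right S Mc hdet]
  intro i j
  rw [hfin, hMc]
  rfl
end

section
/- The solutions (a,b,c) of the equation Wr^d(x+a, x³+bx²+c) = 2x(x-A)(x-B) in complex numbers satisfy a = -1/2 - (A+B)/3 ± (1/3)√(A² + B² - AB - 3/4); in particular, for real A, B all solutions (a,b,c) are real if and only if A² + B² - AB - 3/4 ≥ 0. -/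
private lemma quad_of_sol (A B a b c : ℂ)
    (h : ∀ x : ℂ, (x + a) * ((x + 1) ^ 3 + b * (x + 1) ^ 2 + c)
          - (x + 1 + a) * (x ^ 3 + b * x ^ 2 + c)
          = 2 * x * (x - A) * (x - B)) :
    3 * a ^ 2 + (3 + 2 * (A + B)) * a + (1 + (A + B) + A * B) = 0 := by
  have h0 := h 0
  have h1 := h 1
  have hm := h (-1)
  linear_combination (a/2) * h1 + (a/2 + 1/2) * hm - (a + 1/2) * h0

private lemma b_of_sol (A B a b c : ℂ)
    (h : ∀ x : ℂ, (x + a) * ((x + 1) ^ 3 + b * (x + 1) ^ 2 + c)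
          - (x + 1 + a) * (x ^ 3 + b * x ^ 2 + c)
          = 2 * x * (x - A) * (x - B)) :
    b = -3 - 3 * a - 2 * (A + B) := by
  have h0 := h 0
  have h1 := h 1
  have hm := h (-1)
  linear_combination (h1 + hm) / 2 - h0

private lemma c_of_sol (A B a b c : ℂ)
    (h : ∀ x : ℂ, (x + a) * ((x + 1) ^ 3 + b * (x + 1) ^ 2 + c)
          - (x + 1 + a) * (x ^ 3 + b * x ^ 2 + c)
          = 2 * x * (x - A) * (x - B)) :
    c = a * (1 + b) := by
  linear_combination - h 0

private lemma a_cases (A B a s : ℂ)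
    (hq : 3 * a ^ 2 + (3 + 2 * (A + B)) * a + (1 + (A + B) + A * B) = 0)
    (hs : s ^ 2 = A ^ 2 + B ^ 2 - A * B - 3 / 4) :
    a = -1/2 - (A + B) / 3 + s / 3 ∨ a = -1/2 - (A + B) / 3 - s / 3 := by
  have key : (3 * a + 3/2 + (A + B) - s) * (3 * a + 3/2 + (A + B) + s) = 0 := by
    linear_combination 3 * hq - hs
  rcases mul_eq_zero.mp key with hk | hk
  · left; linear_combination hk / 3
  · right; linear_combination hk / 3

private lemma wr_sol (A B a : ℂ)
    (hq : 3 * a ^ 2 + (3 + 2 * (A + B)) * a + (1 + (A + B) + A * B) = 0) (x : ℂ) :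
    (x + a) * ((x + 1) ^ 3 + (-3 - 3 * a - 2 * (A + B)) * (x + 1) ^ 2
        + a * (1 + (-3 - 3 * a - 2 * (A + B))))
      - (x + 1 + a) * (x ^ 3 + (-3 - 3 * a - 2 * (A + B)) * x ^ 2
        + a * (1 + (-3 - 3 * a - 2 * (A + B))))
      = 2 * x * (x - A) * (x - B) := by
  linear_combination (-2 * x) * hq

/-- Solutions `(a,b,c)` of `Wr^d(x+a, x³+bx²+c) = 2x(x-A)(x-B)` satisfy
`a = -1/2 - (A+B)/3 ± (1/3)√(A² + B² - AB - 3/4)`; in particular, for real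
`A, B` all solutions `(a,b,c)` are real iff `A² + B² - AB - 3/4 ≥ 0`. -/
theorem stmt_6 (A B : ℂ) :
    (∀ a b c : ℂ,
      (∀ x : ℂ, (x + a) * ((x + 1) ^ 3 + b * (x + 1) ^ 2 + c)
          - (x + 1 + a) * (x ^ 3 + b * x ^ 2 + c)
          = 2 * x * (x - A) * (x - B)) →
      ∃ s : ℂ, s ^ 2 = A ^ 2 + B ^ 2 - A * B - 3 / 4 ∧
        (a = -1/2 - (A + B) / 3 + s / 3 ∨ a = -1/2 - (A + B) / 3 - s / 3)) ∧
    (∀ (α β : ℝ), A = (α : ℂ) → B = (β : ℂ) →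
      ((∀ a b c : ℂ,
          (∀ x : ℂ, (x + a) * ((x + 1) ^ 3 + b * (x + 1) ^ 2 + c)
              - (x + 1 + a) * (x ^ 3 + b * x ^ 2 + c)
              = 2 * x * (x - A) * (x - B)) →
          (∃ r : ℝ, a = (r : ℂ)) ∧ (∃ r : ℝ, b = (r : ℂ)) ∧ (∃ r : ℝ, c = (r : ℂ))) ↔
        α ^ 2 + β ^ 2 - α * β - 3 / 4 ≥ 0)) := by
  constructor
  · intro a b c h
    refine ⟨(A ^ 2 + B ^ 2 - A * B - 3 / 4) ^ ((2:ℕ)⁻¹ : ℂ),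
      Complex.cpow_nat_inv_pow _ two_ne_zero, ?_⟩
    exact a_cases A B a _ (quad_of_sol A B a b c h)
      (Complex.cpow_nat_inv_pow _ two_ne_zero)
  · intro α β hA hB
    subst hA; subst hB
    constructor
    · intro hall
      by_contra hlt
      push_neg at hlt
      set D : ℝ := α ^ 2 + β ^ 2 - α * β - 3 / 4 with hD
      have hDneg : 0 < -D := by linarith
      set t : ℝ := Real.sqrt (-D) with ht
      have htpos : 0 < t := Real.sqrt_pos.mpr hDneg
      have ht2 : (t : ℂ) ^ 2 = -(((α:ℂ)) ^ 2 + (β:ℂ) ^ 2 - (α:ℂ) * (β:ℂ) - 3 / 4) := by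
        have h2 : t ^ 2 = -D := Real.sq_sqrt hDneg.le
        rw [← Complex.ofReal_pow, h2, hD]
        push_cast
        ring
      set a : ℂ := -1/2 - ((α:ℂ) + (β:ℂ)) / 3 + Complex.I * (t : ℂ) / 3 with ha
      have hq : 3 * a ^ 2 + (3 + 2 * ((α:ℂ) + (β:ℂ))) * a
          + (1 + ((α:ℂ) + (β:ℂ)) + (α:ℂ) * (β:ℂ)) = 0 := by
        rw [ha]
        linear_combination ((t:ℂ) ^ 2 / 3) * Complex.I_sq - ht2 / 3
      obtain ⟨⟨r, hr⟩, _, _⟩ := hall a _ _ (wr_sol (α:ℂ) (β:ℂ) a hq)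
      have him : a.im = t / 3 := by
        rw [ha]; simp
      rw [hr] at him
      simp at him
      linarith
    · intro hD a b c h
      have hq := quad_of_sol _ _ a b c h
      have hb := b_of_sol _ _ a b c h
      have hc := c_of_sol _ _ a b c h
      have hs : ((Real.sqrt (α ^ 2 + β ^ 2 - α * β - 3 / 4) : ℝ) : ℂ) ^ 2
          = (α:ℂ) ^ 2 + (β:ℂ) ^ 2 - (α:ℂ) * (β:ℂ) - 3 / 4 := by
        have : Real.sqrt (α ^ 2 + β ^ 2 - α * β - 3 / 4) ^ 2
            = α ^ 2 + β ^ 2 - α * β - 3 / 4 := Real.sq_sqrt hD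
        rw [← Complex.ofReal_pow, this]
        push_cast
        ring
      have ha : ∃ r : ℝ, a = (r : ℂ) := by
        rcases a_cases _ _ a _ hq hs with h' | h'
        · exact ⟨-1/2 - (α + β) / 3 + Real.sqrt (α ^ 2 + β ^ 2 - α * β - 3 / 4) / 3,
            by rw [h']; push_cast; ring⟩
        · exact ⟨-1/2 - (α + β) / 3 - Real.sqrt (α ^ 2 + β ^ 2 - α * β - 3 / 4) / 3,
            by rw [h']; push_cast; ring⟩
      obtain ⟨r, hr⟩ := ha
      refine ⟨⟨r, hr⟩, ⟨-3 - 3 * r - 2 * (α + β), ?_⟩, ?_⟩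
      · rw [hb, hr]; push_cast; ring
      · exact ⟨r * (1 + (-3 - 3 * r - 2 * (α + β))), by rw [hc, hb, hr]; push_cast; ring⟩
end

section
/- If Q_i = Q_j for some i ≠ j, then the discrete Wronskian of p(x,Q_1)Q_1^x, ..., p(x,Q_N)Q_N^x vanishes identically, where p(x,Q) = x^d + Σ_{j=1}^N ∏_{r=1}^{j-1}(Q - Q_r) q_j(x); consequently the function W(x, Q_1,...,Q_N) = (∏_i Q_i^{-x} / ∏_{i<j}(Q_j - Q_i)) · Wr^d(p(x,Q_1)Q_1^x, ..., p(x,Q_N)Q_N^x) extends to a polynomial in the variables x, Q_1, ..., Q_N. -/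
open Finset

section Aux
open MvPolynomial

lemma aux_prime_X_sub_X {σ : Type*} [DecidableEq σ] {K : Type*} [Field K] {a b : σ} (h : b ≠ a) :
    Prime (X a - X b : MvPolynomial σ K) := by
  let e := (renameEquiv K (Equiv.optionSubtypeNe a).symm).trans
    (optionEquivLeft K {c : σ // c ≠ a})
  rw [← MulEquiv.prime_iff e.toMulEquiv]
  have he : e (X a - X b) = Polynomial.X - Polynomial.C (X ⟨b, h⟩) := by
    simp only [e, map_sub, AlgEquiv.trans_apply, renameEquiv_apply, rename_X,
      Equiv.optionSubtypeNe_symm_self, Equiv.optionSubtypeNe_symm_of_ne h,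
      optionEquivLeft_X_none, optionEquivLeft_X_some]
  rw [show e.toMulEquiv (X a - X b) = e (X a - X b) from rfl, he]
  exact Polynomial.prime_X_sub_C _

lemma aux_dvd_sub_subst {σ : Type*} [DecidableEq σ] {K : Type*} [CommRing K] (a b : σ)
    (f : MvPolynomial σ K) :
    (X a - X b : MvPolynomial σ K) ∣
      f - aeval (fun s => if s = a then X b else X s) f := by
  induction f using MvPolynomial.induction_on with
  | C c => simp
  | add p q hp hq =>
      have : (p + q) - aeval (fun s => if s = a then X b else X s) (p + q)
          = (p - aeval (fun s => if s = a then X b else X s) p)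
            + (q - aeval (fun s => if s = a then X b else X s) q) := by
        rw [map_add]; ring
      rw [this]; exact dvd_add hp hq
  | mul_X p s hp =>
      have key : p * X s - aeval (fun s => if s = a then X b else X s) (p * X s)
          = p * (X s - (if s = a then X b else X s))
            + (p - aeval (fun s => if s = a then X b else X s) p)
              * (if s = a then X b else X s) := by
        rw [map_mul, aeval_X]; ring
      rw [key]
      refine dvd_add (Dvd.dvd.mul_left ?_ p) (hp.mul_right _)
      by_cases hs : s = a
      · subst hs; simp
      · simp [hs]

lemma aux_dvd_of_subst_eq_zero {σ : Type*} [DecidableEq σ] {K : Type*} [CommRing K] (a b : σ)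
    (f : MvPolynomial σ K) (h : aeval (fun s => if s = a then X b else X s : σ → MvPolynomial σ K) f = 0) :
    (X a - X b : MvPolynomial σ K) ∣ f := by
  have := aux_dvd_sub_subst a b f
  rwa [h, sub_zero] at this

lemma aux_prod_primes_dvd {α : Type*} [CommRing α] [IsDomain α] {ι : Type*} [DecidableEq ι]
    (s : Finset ι) (f : ι → α) (D : α) :
    (∀ p ∈ s, Prime (f p)) → (∀ p ∈ s, f p ∣ D) →
    (∀ p ∈ s, ∀ q ∈ s, p ≠ q → ¬ f p ∣ f q) →
    (∏ p ∈ s, f p) ∣ D := by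
  induction s using Finset.induction_on with
  | empty => intros; simp
  | @insert a t ha ih =>
      intro hprime hdvd hnd
      rw [Finset.prod_insert ha]
      obtain ⟨c, hc⟩ := ih (fun p hp => hprime p (mem_insert_of_mem hp))
        (fun p hp => hdvd p (mem_insert_of_mem hp))
        (fun p hp q hq => hnd p (mem_insert_of_mem hp) q (mem_insert_of_mem hq))
      have hpa : Prime (f a) := hprime a (mem_insert_self a t)
      have h1 : f a ∣ (∏ p ∈ t, f p) * c := hc ▸ hdvd a (mem_insert_self a t)
      have h2 : ¬ f a ∣ ∏ p ∈ t, f p := by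
        rw [hpa.dvd_finset_prod_iff]
        rintro ⟨p, hp, hdp⟩
        exact hnd a (mem_insert_self a t) p (mem_insert_of_mem hp)
          (fun h => ha (h ▸ hp)) hdp
      have h3 : f a ∣ c := (hpa.dvd_mul.mp h1).resolve_left h2
      obtain ⟨e, he⟩ := h3
      exact ⟨e, by rw [hc, he]; ring⟩

noncomputable def entG (N d : ℕ) (q : Fin N → Polynomial ℂ) {S : Type*} [CommRing S] [Algebra ℂ S]
    (Qv : S) (Ys : Fin N → S) (t : S) (k : ℕ) : S :=
  ((t + (k : ℕ)) ^ d + ∑ j : Fin N, (∏ r ∈ univ.filter (· < j), (Qv - Ys r)) *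
      Polynomial.aeval (t + (k : ℕ)) (q j)) * Qv ^ k

lemma entG_map {N d : ℕ} {q : Fin N → Polynomial ℂ} {S T : Type*} [CommRing S] [Algebra ℂ S]
    [CommRing T] [Algebra ℂ T] (ψ : S →ₐ[ℂ] T) (Qv : S) (Ys : Fin N → S) (t : S) (k : ℕ) :
    ψ (entG N d q Qv Ys t k) = entG N d q (ψ Qv) (fun i => ψ (Ys i)) (ψ t) k := by
  simp only [entG, map_mul, map_add, map_pow, map_sum, map_prod, map_sub, map_natCast,
    ← Polynomial.aeval_algHom_apply]

lemma aux_not_dvd {N : ℕ} (i j k l : Fin N) (hij : i < j) (hkl : k < l)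
    (hne : ¬(i = k ∧ j = l)) :
    ¬ ((X (Sum.inl j) - X (Sum.inl i) : MvPolynomial (Fin N ⊕ Unit) ℂ) ∣
        (X (Sum.inl l) - X (Sum.inl k))) := by
  classical
  obtain ⟨m, hmi, hmj, hm⟩ : ∃ m : Fin N, m ≠ i ∧ m ≠ j ∧ (m = k ∨ m = l) := by
    by_cases h : k ≠ i ∧ k ≠ j
    · exact ⟨k, h.1, h.2, Or.inl rfl⟩
    · push_neg at h
      refine ⟨l, ?_, ?_, Or.inr rfl⟩
      · intro hli
        by_cases hk : k = i
        · subst hli; subst hk; exact absurd hkl (lt_irrefl _)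
        · subst hli; rw [h hk] at hkl; exact absurd hkl (asymm hij)
      · intro hlj
        by_cases hk : k = i
        · exact hne ⟨hk.symm, hlj.symm⟩
        · subst hlj; rw [h hk] at hkl; exact absurd hkl (lt_irrefl _)
  rintro ⟨c, hc⟩
  set v : Fin N ⊕ Unit → ℂ := fun s => if s = Sum.inl m then 1 else 0 with hv
  have h1 : MvPolynomial.eval v (X (Sum.inl j) - X (Sum.inl i) : MvPolynomial (Fin N ⊕ Unit) ℂ)
      = 0 := by
    simp only [map_sub, eval_X, hv]
    rw [if_neg (by simpa using hmj.symm), if_neg (by simpa using hmi.symm)]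
    ring
  have h2 : MvPolynomial.eval v (X (Sum.inl l) - X (Sum.inl k) : MvPolynomial (Fin N ⊕ Unit) ℂ)
      ≠ 0 := by
    simp only [map_sub, eval_X, hv]
    rcases hm with rfl | rfl
    · rw [if_neg (by simp [(hkl.ne).symm]), if_pos rfl]; norm_num
    · rw [if_pos rfl, if_neg (by simp [hkl.ne])]; norm_num
  apply h2
  rw [hc, map_mul, h1, zero_mul]

lemma aux_prod_pairs {N : ℕ} {α : Type*} [CommMonoid α] (g : Fin N → Fin N → α) :
    ∏ i, ∏ j ∈ univ.filter (fun j => i < j), g i j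
      = ∏ p ∈ univ.filter (fun p : Fin N × Fin N => p.1 < p.2), g p.1 p.2 := by
  rw [Finset.prod_filter, Fintype.prod_prod_type]
  exact Finset.prod_congr rfl fun i _ => (Finset.prod_filter _ _)

lemma aux_main_dvd (N d : ℕ) (q : Fin N → Polynomial ℂ) :
    (∏ i : Fin N, ∏ j ∈ univ.filter (fun j => i < j),
        (X (Sum.inl j) - X (Sum.inl i) : MvPolynomial (Fin N ⊕ Unit) ℂ)) ∣
      Matrix.det (fun i k : Fin N =>
        entG N d q (X (Sum.inl i)) (fun r => X (Sum.inl r)) (X (Sum.inr ())) (k : ℕ)) := by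
  classical
  rw [aux_prod_pairs]
  apply aux_prod_primes_dvd
  · rintro ⟨k, l⟩ hp
    simp only [mem_filter, mem_univ, true_and] at hp
    exact aux_prime_X_sub_X (by simpa using hp.ne)
  · rintro ⟨k, l⟩ hp
    simp only [mem_filter, mem_univ, true_and] at hp
    apply aux_dvd_of_subst_eq_zero (Sum.inl l) (Sum.inl k)
    rw [show (aeval (fun s => if s = Sum.inl l then X (Sum.inl k) else X s :
          Fin N ⊕ Unit → MvPolynomial (Fin N ⊕ Unit) ℂ))
        (Matrix.det (fun i c : Fin N =>
          entG N d q (X (Sum.inl i)) (fun r => X (Sum.inl r)) (X (Sum.inr ())) (c : ℕ)))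
      = Matrix.det ((aeval (fun s => if s = Sum.inl l then X (Sum.inl k) else X s :
          Fin N ⊕ Unit → MvPolynomial (Fin N ⊕ Unit) ℂ)).mapMatrix
          (Matrix.of (fun i c : Fin N =>
          entG N d q (X (Sum.inl i)) (fun r => X (Sum.inl r)) (X (Sum.inr ())) (c : ℕ))))
      from AlgHom.map_det _ _]
    apply Matrix.det_zero_of_row_eq hp.ne
    funext c
    simp only [AlgHom.mapMatrix_apply, Matrix.map_apply, Matrix.of_apply]
    rw [entG_map, entG_map]
    simp only [aeval_X]
    simp [hp.ne]
  · rintro ⟨k, l⟩ hp ⟨k', l'⟩ hp' hne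
    simp only [mem_filter, mem_univ, true_and] at hp hp'
    apply aux_not_dvd _ _ _ _ hp hp'
    rintro ⟨rfl, rfl⟩
    exact hne rfl

end Aux

/-- With `p(x,Q) = x^d + Σ_j ∏_{r<j}(Q - Q_r) q_j(x)`: if two of the `Q_i`
coincide, the discrete Wronskian of `p(x,Q_1)Q_1^x, …, p(x,Q_N)Q_N^x` vanishes
identically; consequently `W(x,Q) = (∏ Q_i^{-x} / ∏_{i<j}(Q_j - Q_i)) · Wr^d`
extends to a polynomial in `x, Q_1, …, Q_N`. -/
theorem stmt_8 (N d : ℕ) (hN : 2 ≤ N) (hd : N < d)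
    (q : Fin N → Polynomial ℂ) (hq : ∀ j, (q j).degree < d)
    (p : ℂ → ℂ → (Fin N → ℂ) → ℂ)
    (hp : ∀ x Q Qs, p x Q Qs =
      x ^ d + ∑ j : Fin N, (∏ r ∈ univ.filter (· < j), (Q - Qs r)) * (q j).eval x) :
    (∀ Qs : Fin N → ℂ, (∀ i, Qs i ≠ 0) →
      (∃ i j, i ≠ j ∧ Qs i = Qs j) →
      ∀ x : ℂ, Matrix.det
        (fun i j : Fin N => p (x + (j : ℕ)) (Qs i) Qs * Qs i ^ (x + (j : ℕ))) = 0) ∧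
    (∃ P : MvPolynomial (Fin N ⊕ Unit) ℂ,
      ∀ Qs : Fin N → ℂ, Function.Injective Qs → (∀ i, Qs i ≠ 0) →
        ∀ x : ℂ,
          (∏ i, Qs i ^ (-x)) / (∏ i, ∏ j ∈ univ.filter (fun j => i < j), (Qs j - Qs i)) *
            Matrix.det
              (fun i j : Fin N => p (x + (j : ℕ)) (Qs i) Qs * Qs i ^ (x + (j : ℕ)))
          = MvPolynomial.eval (Sum.elim Qs (fun _ => x)) P) := by
  classical
  constructor
  · rintro Qs - ⟨i, j, hij, hQ⟩ x
    apply Matrix.det_zero_of_row_eq hij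
    funext k
    show p (x + (k : ℕ)) (Qs i) Qs * Qs i ^ (x + (k : ℕ))
        = p (x + (k : ℕ)) (Qs j) Qs * Qs j ^ (x + (k : ℕ))
    rw [hQ]
  · obtain ⟨P, hP⟩ := aux_main_dvd N d q
    refine ⟨P, ?_⟩
    intro Qs hinj hQ0 x
    set v : Fin N ⊕ Unit → ℂ := Sum.elim Qs (fun _ => x) with hv
    have haev : ∀ f : MvPolynomial (Fin N ⊕ Unit) ℂ,
        (MvPolynomial.aeval v f : ℂ) = MvPolynomial.eval v f := fun f => rfl
    have hDet : (MvPolynomial.aeval v) (Matrix.det (fun i k : Fin N =>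
          (entG N d q (MvPolynomial.X (Sum.inl i)) (fun r => MvPolynomial.X (Sum.inl r))
            (MvPolynomial.X (Sum.inr ())) (k : ℕ) : MvPolynomial (Fin N ⊕ Unit) ℂ)))
        = Matrix.det (fun i k : Fin N => entG N d q (Qs i) Qs x (k : ℕ)) := by
      rw [show (MvPolynomial.aeval v) (Matrix.det (fun i k : Fin N =>
            (entG N d q (MvPolynomial.X (Sum.inl i)) (fun r => MvPolynomial.X (Sum.inl r))
              (MvPolynomial.X (Sum.inr ())) (k : ℕ) : MvPolynomial (Fin N ⊕ Unit) ℂ)))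
          = Matrix.det ((MvPolynomial.aeval v).mapMatrix (Matrix.of (fun i k : Fin N =>
            (entG N d q (MvPolynomial.X (Sum.inl i)) (fun r => MvPolynomial.X (Sum.inl r))
              (MvPolynomial.X (Sum.inr ())) (k : ℕ) : MvPolynomial (Fin N ⊕ Unit) ℂ))))
          from AlgHom.map_det _ _]
      congr 1
      ext i k
      simp only [AlgHom.mapMatrix_apply, Matrix.map_apply, Matrix.of_apply, entG_map]
      simp [hv]
    have hPf : (MvPolynomial.aeval v) (∏ i : Fin N, ∏ j ∈ univ.filter (fun j => i < j),
          (MvPolynomial.X (Sum.inl j) - MvPolynomial.X (Sum.inl i)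
            : MvPolynomial (Fin N ⊕ Unit) ℂ))
        = ∏ i, ∏ j ∈ univ.filter (fun j => i < j), (Qs j - Qs i) := by
      simp [hv]
    have hden : (∏ i, ∏ j ∈ univ.filter (fun j => i < j), (Qs j - Qs i)) ≠ 0 := by
      rw [Finset.prod_ne_zero_iff]
      intro i _
      rw [Finset.prod_ne_zero_iff]
      intro j hj
      exact sub_ne_zero_of_ne fun h => ((mem_filter.mp hj).2.ne') (hinj h)
    have hsplit : Matrix.det (fun i k : Fin N =>
          p (x + (k : ℕ)) (Qs i) Qs * Qs i ^ (x + (k : ℕ)))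
        = (∏ i, Qs i ^ x) * Matrix.det (fun i k : Fin N => entG N d q (Qs i) Qs x (k : ℕ)) := by
      refine Eq.trans ?_ (Matrix.det_mul_column (fun i => Qs i ^ x)
        (Matrix.of fun i k : Fin N => entG N d q (Qs i) Qs x (k : ℕ)))
      congr 1
      ext i k
      rw [hp]
      simp only [entG, Matrix.of_apply, Polynomial.coe_aeval_eq_eval]
      rw [Complex.cpow_add _ _ (hQ0 i), Complex.cpow_natCast]
      ring
    have hone : (∏ i, Qs i ^ (-x)) * (∏ i, Qs i ^ x) = 1 := by
      rw [← Finset.prod_mul_distrib]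
      rw [Finset.prod_eq_one]
      intro i _
      rw [← Complex.cpow_add _ _ (hQ0 i), neg_add_cancel, Complex.cpow_zero]
    have hkey : Matrix.det (fun i k : Fin N => entG N d q (Qs i) Qs x (k : ℕ))
        = (∏ i, ∏ j ∈ univ.filter (fun j => i < j), (Qs j - Qs i))
          * MvPolynomial.eval v P := by
      have := congrArg (MvPolynomial.aeval v) hP
      rw [map_mul, hDet, hPf, haev] at this
      exact this
    rw [hsplit, hkey, div_mul_eq_mul_div, div_eq_iff hden]
    linear_combination ((∏ i, ∏ j ∈ univ.filter (fun j => i < j), (Qs j - Qs i))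
      * MvPolynomial.eval v P) * hone
end

section
/- The matrix Z^d satisfies the conjugation identity A + B - D⁻¹ S̄ S⁻¹ D = Z^d, where A = diag(a_i), B = diag(m_{ii}) with m_{ii} = Q_i Σ_{s≠i} 1/(Q_i - Q_s), D = diag(∏_{s≠i}(Q_i - Q_s)), S the Vandermonde matrix S_{ij} = Q_i^{j-1}, and S̄_{ij} = (j-1)Q_i^{j-1}. -/
open Matrix Finset

open Polynomial


theorem myDerivProd {ι : Type*} [DecidableEq ι] (s : Finset ι) (f : ι → ℂ[X]) :
    derivative (∏ i ∈ s, f i) = ∑ i ∈ s, (∏ j ∈ s.erase i, f j) * derivative (f i) := by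
  induction s using Finset.induction with
  | empty => simp
  | @insert a s ha ih =>
    rw [Finset.prod_insert ha, derivative_mul, ih, Finset.sum_insert ha,
      Finset.erase_insert ha, Finset.mul_sum, mul_comm (derivative (f a))]
    congr 1
    refine Finset.sum_congr rfl fun i hi => ?_
    rw [Finset.erase_insert_of_ne (by rintro rfl; exact ha hi),
      Finset.prod_insert (fun h => ha (Finset.mem_of_mem_erase h))]
    ring

theorem derivBD (x y : ℂ) : derivative (Lagrange.basisDivisor x y) = C (x - y)⁻¹ := by
  simp [Lagrange.basisDivisor]

theorem evalD_self {N : ℕ} (Q : Fin N → ℂ) (hQ : Function.Injective Q) (i : Fin N) :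
    eval (Q i) (derivative (Lagrange.basis univ Q i)) = ∑ t ∈ univ.erase i, (Q i - Q t)⁻¹ := by
  rw [Lagrange.basis, myDerivProd, eval_finset_sum]
  refine Finset.sum_congr rfl fun t ht => ?_
  rw [eval_mul, eval_prod, derivBD, eval_C]
  rw [Finset.prod_eq_one fun s hs => Lagrange.eval_basisDivisor_left_of_ne
    (hQ.ne (Finset.mem_erase.1 (Finset.mem_of_mem_erase hs)).1.symm), one_mul]

theorem evalD_ne {N : ℕ} (Q : Fin N → ℂ) (hQ : Function.Injective Q) {i k : Fin N}
    (hik : i ≠ k) :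
    eval (Q i) (derivative (Lagrange.basis univ Q k)) =
      (∏ s ∈ (univ.erase k).erase i, ((Q k - Q s)⁻¹ * (Q i - Q s))) * (Q k - Q i)⁻¹ := by
  rw [Lagrange.basis, myDerivProd, eval_finset_sum]
  have hi' : i ∈ univ.erase k := Finset.mem_erase.2 ⟨hik, Finset.mem_univ i⟩
  rw [← Finset.add_sum_erase _ _ hi']
  have hz : ∑ t ∈ (univ.erase k).erase i,
      eval (Q i) ((∏ s ∈ (univ.erase k).erase t, Lagrange.basisDivisor (Q k) (Q s)) *
        derivative (Lagrange.basisDivisor (Q k) (Q t))) = 0 := by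
    refine Finset.sum_eq_zero fun t ht => ?_
    rw [eval_mul, eval_prod]
    have hit : i ∈ (univ.erase k).erase t :=
      Finset.mem_erase.2 ⟨(Finset.mem_erase.1 ht).1.symm, hi'⟩
    rw [Finset.prod_eq_zero hit (Lagrange.eval_basisDivisor_right), zero_mul]
  rw [hz, add_zero, eval_mul, eval_prod, derivBD, eval_C]
  congr 1
  refine Finset.prod_congr rfl fun s hs => ?_
  simp [Lagrange.basisDivisor]

theorem keyLag {N : ℕ} (Q : Fin N → ℂ) (hQ : Function.Injective Q) (i j : Fin N) :
    ∑ k, Q k ^ (j : ℕ) * eval (Q i) (derivative (Lagrange.basis univ Q k)) =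
      ((j : ℕ) : ℂ) * Q i ^ ((j : ℕ) - 1) := by
  have hinj : Set.InjOn Q (univ : Finset (Fin N)) := fun x _ y _ h => hQ h
  have hdeg : (X ^ (j : ℕ) : ℂ[X]).degree < (#(univ : Finset (Fin N)) : ℕ) := by
    rw [degree_X_pow, Finset.card_univ, Fintype.card_fin]
    exact_mod_cast j.isLt
  have h := Lagrange.eq_interpolate (f := (X ^ (j : ℕ) : ℂ[X])) hinj hdeg
  rw [Lagrange.interpolate_apply] at h
  have h2 := congrArg (fun p => eval (Q i) (derivative p)) h
  simp only [derivative_X_pow, eval_mul, eval_C, eval_pow, eval_X] at h2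
  rw [h2, map_sum derivative, eval_finset_sum]
  apply Finset.sum_congr rfl
  intro k _
  rw [derivative_C_mul, eval_mul, eval_C]

/-- The conjugation identity `A + B - D⁻¹ S̄ S⁻¹ D = Z^d`, where `A = diag a`,
`B = diag (Q i Σ_{s≠i} 1/(Q i - Q s))`, `D = diag (∏_{s≠i}(Q i - Q s))`, `S` is
the Vandermonde matrix and `S̄ i j = j Q i ^ j` (0-indexed), and `Z^d` has
diagonal entries `a i` and off-diagonal entries `Q i/(Q j - Q i)`. -/
theorem stmt_14 (N : ℕ) (Q : Fin N → ℂ) (hQdist : Function.Injective Q)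
    (hQ0 : ∀ i, Q i ≠ 0) (a : Fin N → ℂ)
    (S Sbar A B D Zd : Matrix (Fin N) (Fin N) ℂ)
    (hS : ∀ i j, S i j = Q i ^ (j : ℕ))
    (hSbar : ∀ i j, Sbar i j = (j : ℕ) * Q i ^ (j : ℕ))
    (hA : A = Matrix.diagonal a)
    (hB : B = Matrix.diagonal (fun i => Q i * ∑ s ∈ univ.erase i, 1 / (Q i - Q s)))
    (hD : D = Matrix.diagonal (fun i => ∏ s ∈ univ.erase i, (Q i - Q s)))
    (hZd : ∀ i j, Zd i j = if i = j then a i else Q i / (Q j - Q i)) :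
    A + B - D⁻¹ * Sbar * S⁻¹ * D = Zd := by
  set d : Fin N → ℂ := fun i => ∏ s ∈ univ.erase i, (Q i - Q s) with hd
  have hdne : ∀ i, d i ≠ 0 := fun i => Finset.prod_ne_zero_iff.2 fun s hs =>
    sub_ne_zero.2 (hQdist.ne (Finset.mem_erase.1 hs).1.symm)
  have hSv : S = Matrix.vandermonde Q := by
    ext i j; rw [hS]; rfl
  have hSdet : IsUnit S.det := by
    rw [hSv, Matrix.det_vandermonde, isUnit_iff_ne_zero]
    refine Finset.prod_ne_zero_iff.2 fun i _ => Finset.prod_ne_zero_iff.2 fun k hk => ?_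
    exact sub_ne_zero.2 (hQdist.ne (Finset.mem_Ioi.1 hk).ne')
  have hDdet : IsUnit D.det := by
    rw [hD, Matrix.det_diagonal, isUnit_iff_ne_zero]
    exact Finset.prod_ne_zero_iff.2 fun i _ => hdne i
  have hDinv : D⁻¹ = Matrix.diagonal (fun i => (d i)⁻¹) := by
    apply Matrix.inv_eq_right_inv
    rw [hD, Matrix.diagonal_mul_diagonal,
      show (fun i => d i * (d i)⁻¹) = fun _ => (1 : ℂ) from
        funext fun i => mul_inv_cancel₀ (hdne i),
      Matrix.diagonal_one]
  have hE : D * (A + B - Zd) * D⁻¹ * S = Sbar := by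
    ext i j
    rw [hSbar, Matrix.mul_apply]
    have hent : ∀ k, (D * (A + B - Zd) * D⁻¹) i k * S k j =
        Q i * (Q k ^ (j : ℕ) * eval (Q i) (derivative (Lagrange.basis univ Q k))) := by
      intro k
      rw [hDinv, hD, hS, Matrix.mul_diagonal, Matrix.diagonal_mul,
        Matrix.sub_apply, Matrix.add_apply, hA, hB, hZd]
      by_cases hk : k = i
      · subst hk
        rw [evalD_self Q hQdist]
        simp only [Matrix.diagonal_apply_eq, eq_self_iff_true, if_true, one_div]
        field_simp [hdne k]
        ring
      · have hik : i ≠ k := fun h => hk h.symm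
        rw [evalD_ne Q hQdist hik]
        rw [Matrix.diagonal_apply_ne _ hik, Matrix.diagonal_apply_ne _ hik, if_neg hik]
        have hmemk : k ∈ univ.erase i := Finset.mem_erase.2 ⟨hk, Finset.mem_univ k⟩
        have hmemi : i ∈ univ.erase k := Finset.mem_erase.2 ⟨hik, Finset.mem_univ i⟩
        have hdi : d i = (Q i - Q k) * ∏ s ∈ (univ.erase k).erase i, (Q i - Q s) := by
          show (∏ s ∈ univ.erase i, (Q i - Q s)) = _
          rw [← Finset.mul_prod_erase _ _ hmemk, Finset.erase_right_comm]
        have hdk : d k = (Q k - Q i) * ∏ s ∈ (univ.erase k).erase i, (Q k - Q s) := by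
          show (∏ s ∈ univ.erase k, (Q k - Q s)) = _
          rw [← Finset.mul_prod_erase _ _ hmemi]
        have hPk : (∏ s ∈ (univ.erase k).erase i, (Q k - Q s)) ≠ 0 :=
          Finset.prod_ne_zero_iff.2 fun s hs => sub_ne_zero.2
            (hQdist.ne (Finset.mem_erase.1 (Finset.mem_of_mem_erase hs)).1.symm)
        have hki : Q k - Q i ≠ 0 := sub_ne_zero.2 (hQdist.ne hk)
        rw [hdi, hdk, Finset.prod_mul_distrib, Finset.prod_inv_distrib]
        field_simp
        ring
    have hp : ∀ n : ℕ, Q i * ((n : ℂ) * Q i ^ (n - 1)) = (n : ℂ) * Q i ^ n := by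
      intro n
      cases n with
      | zero => simp
      | succ m => rw [Nat.add_sub_cancel, pow_succ]; push_cast; ring
    rw [Finset.sum_congr rfl fun k _ => hent k, ← Finset.mul_sum, keyLag Q hQdist i j]
    exact hp (j : ℕ)
  have hconj : D⁻¹ * Sbar * S⁻¹ * D = A + B - Zd := by
    rw [← hE]
    simp only [Matrix.mul_assoc]
    rw [Matrix.mul_nonsing_inv_cancel_left _ _ hSdet,
      Matrix.nonsing_inv_mul_cancel_left _ _ hDdet,
      Matrix.nonsing_inv_mul _ hDdet, Matrix.mul_one]
  rw [hconj, sub_sub_cancel]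
end

section
/- The differential Wronskian Wr((x - ã_1)e^{λ_1 x}, ..., (x - ã_N)e^{λ_N x}), where ã_i = a_i + Σ_{s≠i} 1/(λ_i - λ_s), equals e^{(Σλ_i)x} ∏_{i<j}(λ_j - λ_i) times the characteristic polynomial det(x·I - Z) of the matrix Z with diagonal entries a_i and off-diagonal entries 1/(λ_j - λ_i); in particular, the zeroes of this Wronskian are exactly the eigenvalues of Z. -/
open Matrix Finset Polynomial

lemma iter_deriv (c lam : ℂ) (j : ℕ) :
    iteratedDeriv j (fun t => (t - c) * Complex.exp (lam * t))
      = fun x => (lam ^ j * (x - c) + j * lam ^ (j-1)) * Complex.exp (lam * x) := by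
  induction j with
  | zero => simp
  | succ k ih =>
    rw [iteratedDeriv_succ, ih]
    funext x
    have h1 : HasDerivAt (fun x : ℂ => (lam ^ k * (x - c) + k * lam ^ (k-1)) * Complex.exp (lam * x))
        ((lam ^ k) * Complex.exp (lam * x)
          + (lam ^ k * (x - c) + k * lam ^ (k-1)) * (Complex.exp (lam * x) * lam)) x := by
      have hp : HasDerivAt (fun x : ℂ => lam ^ k * (x - c) + k * lam ^ (k-1)) (lam ^ k) x := by
        simpa using (((hasDerivAt_id x).sub_const c).const_mul (lam ^ k)).add_const (k * lam ^ (k-1))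
      have he : HasDerivAt (fun x : ℂ => Complex.exp (lam * x)) (Complex.exp (lam * x) * lam) x := by
        exact ((Complex.hasDerivAt_exp (lam * x)).comp x
          ((hasDerivAt_id x).const_mul lam)).congr_deriv (by simp [mul_comm])
      exact hp.mul he
    rw [h1.deriv]
    cases k with
    | zero => simp; ring
    | succ m =>
      simp only [Nat.succ_sub_one]
      push_cast
      ring

lemma lagrange_deriv_sum {N : ℕ} (lam : Fin N → ℂ) (hlam : Function.Injective lam)
    (j : ℕ) (hj : j < N) (i : Fin N) :
    ∑ k, lam k ^ j * (Polynomial.derivative (Lagrange.basis univ lam k)).eval (lam i)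
      = j * lam i ^ (j-1) := by
  have hdeg : (X ^ j : ℂ[X]).degree < (univ : Finset (Fin N)).card := by
    simpa [degree_X_pow] using (by exact_mod_cast hj : (j : WithBot ℕ) < (N : WithBot ℕ))
  have h := Lagrange.eq_interpolate (f := (X ^ j : ℂ[X])) hlam.injOn hdeg
  have h2 := congrArg (fun p => (Polynomial.derivative p).eval (lam i)) h
  simp only [Lagrange.interpolate_apply, map_sum, derivative_C_mul, eval_finset_sum,
    derivative_X_pow, eval_mul, eval_C, eval_pow, eval_X, eval_natCast] at h2
  rw [← h2]

lemma derivative_finset_prod {ι : Type*} [DecidableEq ι] (s : Finset ι) (f : ι → ℂ[X]) :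
    Polynomial.derivative (∏ i ∈ s, f i)
      = ∑ i ∈ s, (∏ j ∈ s.erase i, f j) * Polynomial.derivative (f i) := by
  induction s using Finset.induction_on with
  | empty => simp
  | @insert a s ha ih =>
    rw [Finset.prod_insert ha, derivative_mul, ih, Finset.sum_insert ha,
      Finset.erase_insert ha, Finset.mul_sum]
    rw [mul_comm (Polynomial.derivative (f a)) (∏ i ∈ s, f i)]
    congr 1
    refine Finset.sum_congr rfl fun i hi => ?_
    rw [Finset.erase_insert_of_ne (fun h => ha (by rw [h]; exact hi)),
      Finset.prod_insert (fun h => ha (Finset.mem_of_mem_erase h)), mul_assoc]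

lemma basis_deriv_eval {N : ℕ} (lam : Fin N → ℂ) (hlam : Function.Injective lam)
    (k : Fin N) (t : ℂ) :
    (Polynomial.derivative (Lagrange.basis univ lam k)).eval t
      = ∑ s ∈ univ.erase k,
          (∏ j ∈ (univ.erase k).erase s, (lam k - lam j)⁻¹ * (t - lam j))
            * (lam k - lam s)⁻¹ := by
  rw [Lagrange.basis, derivative_finset_prod, eval_finset_sum]
  refine Finset.sum_congr rfl fun s hs => ?_
  rw [Lagrange.basisDivisor]
  simp [Lagrange.basisDivisor, eval_prod]

lemma basis_deriv_diag {N : ℕ} (lam : Fin N → ℂ) (hlam : Function.Injective lam)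
    (k : Fin N) :
    (Polynomial.derivative (Lagrange.basis univ lam k)).eval (lam k)
      = ∑ s ∈ univ.erase k, (lam k - lam s)⁻¹ := by
  rw [basis_deriv_eval lam hlam]
  refine Finset.sum_congr rfl fun s hs => ?_
  rw [Finset.prod_eq_one, one_mul]
  intro j hj
  have hjk : j ≠ k := Finset.ne_of_mem_erase (Finset.mem_of_mem_erase hj)
  rw [inv_mul_cancel₀]
  exact sub_ne_zero.mpr fun h => hjk.symm (hlam h)

lemma basis_deriv_off {N : ℕ} (lam : Fin N → ℂ) (hlam : Function.Injective lam)
    (k i : Fin N) (hik : i ≠ k) :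
    (Polynomial.derivative (Lagrange.basis univ lam k)).eval (lam i)
      = (∏ j ∈ (univ.erase k).erase i, (lam k - lam j)⁻¹ * (lam i - lam j))
          * (lam k - lam i)⁻¹ := by
  rw [basis_deriv_eval lam hlam]
  rw [Finset.sum_eq_single i]
  · intro s hs hsi
    apply mul_eq_zero_of_left
    refine Finset.prod_eq_zero (i := i) ?_ (by simp)
    exact Finset.mem_erase.mpr ⟨hsi.symm, Finset.mem_erase.mpr ⟨hik, Finset.mem_univ i⟩⟩
  · intro h
    exact absurd (Finset.mem_erase.mpr ⟨hik, Finset.mem_univ i⟩) h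

/-- The Wronskian of `(x - ã i) e^{λ i x}`, with `ã i = a i + Σ_{s≠i} 1/(λ i - λ s)`,
equals `e^{(Σ λ) x} ∏_{i<j} (λ j - λ i)` times the characteristic polynomial of
the matrix `Z` (diagonal `a i`, off-diagonal `1/(λ j - λ i)`) evaluated at `x`;
in particular the zeroes of this Wronskian are exactly the eigenvalues of `Z`. -/
theorem stmt_15 (N : ℕ) (lam : Fin N → ℂ) (hlam : Function.Injective lam)
    (a : Fin N → ℂ) (atil : Fin N → ℂ)
    (hatil : ∀ i, atil i = a i + ∑ s ∈ univ.erase i, 1 / (lam i - lam s))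
    (Z : Matrix (Fin N) (Fin N) ℂ)
    (hZ : ∀ i j, Z i j = if i = j then a i else 1 / (lam j - lam i)) :
    (∀ x : ℂ,
      Matrix.det (fun i j : Fin N =>
          iteratedDeriv (j : ℕ) (fun t => (t - atil i) * Complex.exp (lam i * t)) x)
        = Complex.exp ((∑ i, lam i) * x) *
            (∏ i, ∏ j ∈ univ.filter (fun j => i < j), (lam j - lam i)) *
            (Matrix.charpoly Z).eval x) ∧
    (∀ x : ℂ,
      Matrix.det (fun i j : Fin N =>
          iteratedDeriv (j : ℕ) (fun t => (t - atil i) * Complex.exp (lam i * t)) x) = 0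
        ↔ (Matrix.charpoly Z).IsRoot x) := by
  have hne : ∀ {p q : Fin N}, p ≠ q → lam p - lam q ≠ 0 :=
    fun {p q} h => sub_ne_zero.mpr (fun e => h (hlam e))
  have hfil : ∀ i : Fin N, univ.filter (fun j => i < j) = Finset.Ioi i := by
    intro i; ext j; simp
  have hvne : (∏ i, ∏ j ∈ univ.filter (fun j => i < j), (lam j - lam i)) ≠ 0 := by
    refine Finset.prod_ne_zero_iff.mpr fun i _ => Finset.prod_ne_zero_iff.mpr fun j hj => ?_
    rw [hfil, Finset.mem_Ioi] at hj
    exact hne (ne_of_gt hj)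
  have key : ∀ x : ℂ,
      Matrix.det (fun i j : Fin N =>
          iteratedDeriv (j : ℕ) (fun t => (t - atil i) * Complex.exp (lam i * t)) x)
        = Complex.exp ((∑ i, lam i) * x) *
            (∏ i, ∏ j ∈ univ.filter (fun j => i < j), (lam j - lam i)) *
            (Matrix.charpoly Z).eval x := by
    intro x
    set B : Matrix (Fin N) (Fin N) ℂ := Matrix.of fun i k =>
      (if i = k then x - atil i else 0)
        + (Polynomial.derivative (Lagrange.basis univ lam k)).eval (lam i) with hB
    -- Step 1: the Wronskian matrix is rows-scaled (B * vandermonde)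
    have step1 : (fun i j : Fin N =>
          iteratedDeriv (j : ℕ) (fun t => (t - atil i) * Complex.exp (lam i * t)) x)
        = Matrix.of (fun i j : Fin N =>
            Complex.exp (lam i * x) * ((B * Matrix.vandermonde lam) i j)) := by
      funext i j
      rw [iter_deriv]
      have hBV : (B * Matrix.vandermonde lam) i j
          = (x - atil i) * lam i ^ (j : ℕ) + (j : ℕ) * lam i ^ ((j : ℕ) - 1) := by
        rw [Matrix.mul_apply]
        simp only [hB, Matrix.of_apply, Matrix.vandermonde_apply, add_mul]
        rw [Finset.sum_add_distrib]
        congr 1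
        · rw [Finset.sum_eq_single i]
          · simp
          · intro k _ hki; rw [if_neg (Ne.symm hki), zero_mul]
          · intro h; exact absurd (Finset.mem_univ i) h
        · rw [← lagrange_deriv_sum lam hlam (j : ℕ) j.isLt i]
          exact Finset.sum_congr rfl fun k _ => mul_comm _ _
      rw [Matrix.of_apply, hBV]
      ring
    rw [step1]
    rw [Matrix.det_mul_column (fun i => Complex.exp (lam i * x)) (B * Matrix.vandermonde lam)]
    have hexp : (∏ i, Complex.exp (lam i * x)) = Complex.exp ((∑ i, lam i) * x) := by
      rw [← Complex.exp_sum, Finset.sum_mul]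
    -- Step 3: det B = charpoly eval
    set d : Fin N → ℂ := fun i => ∏ s ∈ univ.erase i, (lam i - lam s) with hd
    have hdne : ∀ i, d i ≠ 0 := fun i =>
      Finset.prod_ne_zero_iff.mpr fun s hs => hne (Finset.ne_of_mem_erase hs).symm
    set E : Matrix (Fin N) (Fin N) ℂ :=
      Matrix.of fun i j => (if i = j then x else 0) - Z i j with hE
    have hcomm : Matrix.diagonal d * E = B * Matrix.diagonal d := by
      ext i j
      rw [Matrix.diagonal_mul, Matrix.mul_diagonal]
      by_cases hij : i = j
      · subst hij
        simp only [hB, hE, Matrix.of_apply, if_pos rfl, hZ i i, if_pos rfl,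
          basis_deriv_diag lam hlam i, hatil i]
        rw [mul_comm]
        congr 1
        simp [sub_add_eq_sub_sub, one_div]
      · simp only [hB, hE, Matrix.of_apply, if_neg hij, hZ i j, if_neg hij, zero_add,
          basis_deriv_off lam hlam j i hij]
        have hiej : i ∈ univ.erase j := Finset.mem_erase.mpr ⟨hij, Finset.mem_univ i⟩
        have hjei : j ∈ univ.erase i := Finset.mem_erase.mpr ⟨Ne.symm hij, Finset.mem_univ j⟩
        have hdi : d i = (lam i - lam j) * ∏ s ∈ (univ.erase j).erase i, (lam i - lam s) := by
          show (∏ s ∈ univ.erase i, (lam i - lam s)) = _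
          rw [← Finset.mul_prod_erase (univ.erase i) _ hjei, Finset.erase_right_comm]
        have hdj : d j = (lam j - lam i) * ∏ s ∈ (univ.erase j).erase i, (lam j - lam s) := by
          show (∏ s ∈ univ.erase j, (lam j - lam s)) = _
          rw [← Finset.mul_prod_erase (univ.erase j) _ hiej]
        have hPj : (∏ t ∈ (univ.erase j).erase i, (lam j - lam t)) ≠ 0 :=
          Finset.prod_ne_zero_iff.mpr fun t ht =>
            hne (Ne.symm (Finset.ne_of_mem_erase (Finset.mem_of_mem_erase ht)))
        rw [hdi, hdj, Finset.prod_mul_distrib, Finset.prod_inv_distrib]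
        have hji : lam j - lam i ≠ 0 := hne (Ne.symm hij)
        field_simp
        ring
    have hdetE : E.det = (Matrix.charpoly Z).eval x := by
      rw [Matrix.charpoly, ← Polynomial.coe_evalRingHom, RingHom.map_det]
      congr 1
      ext i j
      by_cases h : i = j
      · subst h
        simp [Matrix.charmatrix_apply_eq, hE]
      · simp [Matrix.charmatrix_apply_ne _ _ _ h, hE, h]
    have hdetB : B.det = (Matrix.charpoly Z).eval x := by
      have h1 := congrArg Matrix.det hcomm
      rw [Matrix.det_mul, Matrix.det_mul, Matrix.det_diagonal] at h1
      have h2 : (∏ i, d i) ≠ 0 := Finset.prod_ne_zero_iff.mpr fun i _ => hdne i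
      rw [← hdetE]
      rw [mul_comm B.det _] at h1
      exact (mul_left_cancel₀ h2 h1).symm
    rw [Matrix.det_mul, hdetB, Matrix.det_vandermonde, hexp]
    have : (∏ i, ∏ j ∈ univ.filter (fun j => i < j), (lam j - lam i))
        = ∏ i, ∏ j ∈ Finset.Ioi i, (lam j - lam i) := by
      exact Finset.prod_congr rfl fun i _ => by rw [hfil i]
    rw [← this]
    ring
  refine ⟨key, fun x => ?_⟩
  rw [key x, Polynomial.IsRoot]
  simp [Complex.exp_ne_zero, hvne]
end
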